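/- Let p be an odd prime and let α ∈ 𝔽_p be a quadratic non-residue if p ≡ 1 (mod 4), and a nonzero quadratic residue if p ≡ 3 (mod 4). Then the set A = { (x_1, x_2, x_3) ∈ 𝔽_p^3 : x_1² + x_2² + x_3² = α } is a C_3[3]-set in the additive group 𝔽_p^3, and |A| ≥ p² - p. -/

import Mathlib

open Finset

section Tri
variable {K : Type*} [Field K]

def dotp (u v : K × K × K) : K := u.1 * v.1 + u.2.1 * v.2.1 + u.2.2 * v.2.2

def crossp (u v : K × K × K) : K × K × K :=
  (u.2.1 * v.2.2 - u.2.2 * v.2.1, u.2.2 * v.1 - u.1 * v.2.2, u.1 * v.2.1 - u.2.1 * v.1)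

def smt (μ : K) (v : K × K × K) : K × K × K := (μ * v.1, μ * v.2.1, μ * v.2.2)

lemma dotp_comm (u v : K × K × K) : dotp u v = dotp v u := by simp [dotp]; ring

lemma dotp_smt_right (μ : K) (u v : K × K × K) : dotp u (smt μ v) = μ * dotp u v := by
  simp [dotp, smt]; ring

lemma dotp_smt_smt (μ ν : K) (u v : K × K × K) :
    dotp (smt μ u) (smt ν v) = μ * ν * dotp u v := by
  simp [dotp, smt]; ring

lemma smt_smt (μ ν : K) (v : K × K × K) : smt μ (smt ν v) = smt (μ * ν) v := by
  simp [smt, Prod.ext_iff]; constructor; ring; constructor <;> ring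

lemma crossp_comm (u v : K × K × K) : crossp u v = - crossp v u := by
  simp [crossp, Prod.ext_iff]; constructor; ring; constructor <;> ring

lemma crossp_smt_right (μ : K) (u v : K × K × K) : crossp u (smt μ v) = smt μ (crossp u v) := by
  simp [crossp, smt, Prod.ext_iff]; constructor; ring; constructor <;> ring

lemma triple_prod (a b c : K × K × K) :
    crossp a (crossp b c) = smt (dotp a c) b - smt (dotp a b) c := by
  simp [crossp, dotp, smt, Prod.ext_iff]; constructor; ring; constructor <;> ring

lemma ne_zero_iff (d : K × K × K) : d ≠ 0 ↔ d.1 ≠ 0 ∨ d.2.1 ≠ 0 ∨ d.2.2 ≠ 0 := by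
  rw [Ne, Prod.ext_iff, Prod.ext_iff]
  simp only [Prod.fst_zero, Prod.snd_zero]
  tauto

lemma smt_cancel {a b : K} {d : K × K × K} (hd : d ≠ 0) (h : smt a d = smt b d) : a = b := by
  rw [ne_zero_iff] at hd
  rw [Prod.ext_iff, Prod.ext_iff] at h
  simp only [smt] at h
  rcases hd with h1 | h1 | h1
  · exact mul_right_cancel₀ h1 h.1
  · exact mul_right_cancel₀ h1 h.2.1
  · exact mul_right_cancel₀ h1 h.2.2

lemma parallel_of_crossp_eq_zero {d c : K × K × K} (hd : d ≠ 0) (h : crossp d c = 0) :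
    ∃ μ : K, c = smt μ d := by
  rw [ne_zero_iff] at hd
  rw [Prod.ext_iff, Prod.ext_iff] at h
  simp only [crossp, Prod.fst_zero, Prod.snd_zero, sub_eq_zero] at h
  obtain ⟨h1, h2, h3⟩ := h
  rcases hd with h0 | h0 | h0
  · refine ⟨c.1 / d.1, ?_⟩
    rw [Prod.ext_iff, Prod.ext_iff]; simp only [smt]
    refine ⟨by field_simp, by field_simp; linear_combination h3, by field_simp; linear_combination -h2⟩
  · refine ⟨c.2.1 / d.2.1, ?_⟩
    rw [Prod.ext_iff, Prod.ext_iff]; simp only [smt]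
    refine ⟨by field_simp; linear_combination -h3, by field_simp, by field_simp; linear_combination h1⟩
  · refine ⟨c.2.2 / d.2.2, ?_⟩
    rw [Prod.ext_iff, Prod.ext_iff]; simp only [smt]
    refine ⟨by field_simp; linear_combination h2, by field_simp; linear_combination -h1, by field_simp⟩

end Tri

section Tri2
variable {K : Type*} [Field K]

lemma key_isotropic {d v : K × K × K} (hd : d ≠ 0) (hdd : dotp d d = 0)
    (hdv : dotp d v = 0) : ∃ β : K, β ^ 2 = - dotp v v := by
  have h1 : crossp d (crossp d v) = 0 := by
    rw [triple_prod, hdv, hdd]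
    simp [smt, Prod.ext_iff]
  obtain ⟨μ, hμ⟩ := parallel_of_crossp_eq_zero hd h1
  have h2 : crossp v (crossp d v) = smt (dotp v v) d - smt (dotp v d) v := triple_prod v d v
  rw [dotp_comm v d, hdv, hμ, crossp_smt_right, crossp_comm v d, hμ] at h2
  have h3 : smt (-(μ * μ)) d = smt (dotp v v) d := by
    simp only [smt, Prod.ext_iff, Prod.fst_sub, Prod.snd_sub, Prod.fst_neg, Prod.snd_neg,
      Prod.fst_zero, Prod.snd_zero] at h2 ⊢
    obtain ⟨A1, A2, A3⟩ := h2
    exact ⟨by linear_combination A1, by linear_combination A2, by linear_combination A3⟩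
  refine ⟨μ, ?_⟩
  have := smt_cancel hd h3
  rw [← this]; ring

lemma grid_lemma (h2K : (2 : K) ≠ 0) (α : K) (a b c k1 k2 k3 : K × K × K)
    (hbc : b ≠ c) (hab : a ≠ b) (hac : a ≠ c)
    (hk12 : k1 ≠ k2) (hk13 : k1 ≠ k3) (hk23 : k2 ≠ k3)
    (H : ∀ x k : K × K × K, (x = a ∨ x = b ∨ x = c) → (k = k1 ∨ k = k2 ∨ k = k3) →
      dotp (x + k) (x + k) = α) :
    ∃ β : K, β ^ 2 = -α := by
  set v := a + k1 with hv
  set e2 := b - a with he2d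
  set e3 := c - a with he3d
  set d2 := k2 - k1 with hd2d
  set d3 := k3 - k1 with hd3d
  have Ha1 := H a k1 (Or.inl rfl) (Or.inl rfl)
  have Ha2 := H a k2 (Or.inl rfl) (Or.inr (Or.inl rfl))
  have Ha3 := H a k3 (Or.inl rfl) (Or.inr (Or.inr rfl))
  have Hb1 := H b k1 (Or.inr (Or.inl rfl)) (Or.inl rfl)
  have Hb2 := H b k2 (Or.inr (Or.inl rfl)) (Or.inr (Or.inl rfl))
  have Hb3 := H b k3 (Or.inr (Or.inl rfl)) (Or.inr (Or.inr rfl))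
  have Hc1 := H c k1 (Or.inr (Or.inr rfl)) (Or.inl rfl)
  have Hc2 := H c k2 (Or.inr (Or.inr rfl)) (Or.inr (Or.inl rfl))
  have Hc3 := H c k3 (Or.inr (Or.inr rfl)) (Or.inr (Or.inr rfl))
  simp only [dotp, Prod.fst_add, Prod.snd_add] at Ha1 Ha2 Ha3 Hb1 Hb2 Hb3 Hc1 Hc2 Hc3
  have hvv : dotp v v = α := by
    simp only [dotp, hv, Prod.fst_add, Prod.snd_add]; linear_combination Ha1
  -- relations (1)
  have R1 : ∀ e : K × K × K, (e = e2 ∨ e = e3) → 2 * dotp v e + dotp e e = 0 := by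
    rintro e (rfl | rfl) <;>
      simp only [dotp, hv, he2d, he3d, Prod.fst_add, Prod.snd_add, Prod.fst_sub, Prod.snd_sub]
    · linear_combination Hb1 - Ha1
    · linear_combination Hc1 - Ha1
  have R2 : ∀ d : K × K × K, (d = d2 ∨ d = d3) → 2 * dotp v d + dotp d d = 0 := by
    rintro d (rfl | rfl) <;>
      simp only [dotp, hv, hd2d, hd3d, Prod.fst_add, Prod.snd_add, Prod.fst_sub, Prod.snd_sub]
    · linear_combination Ha2 - Ha1
    · linear_combination Ha3 - Ha1
  have R3 : ∀ e d : K × K × K, (e = e2 ∨ e = e3) → (d = d2 ∨ d = d3) → dotp e d = 0 := by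
    rintro e d he hd
    have h2 : 2 * dotp e d = 0 := by
      rcases he with rfl | rfl <;> rcases hd with rfl | rfl <;>
        simp only [dotp, he2d, he3d, hd2d, hd3d, Prod.fst_sub, Prod.snd_sub]
      · linear_combination Hb2 - Ha2 - Hb1 + Ha1
      · linear_combination Hb3 - Ha3 - Hb1 + Ha1
      · linear_combination Hc2 - Ha2 - Hc1 + Ha1
      · linear_combination Hc3 - Ha3 - Hc1 + Ha1
    exact (mul_eq_zero.mp h2).resolve_left h2K
  have he2ne : e2 ≠ 0 := fun h => hab (by rw [he2d, sub_eq_zero] at h; exact h.symm)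
  have he3ne : e3 ≠ 0 := fun h => hac (by rw [he3d, sub_eq_zero] at h; exact h.symm)
  have hd2ne : d2 ≠ 0 := fun h => hk12 (by rw [hd2d, sub_eq_zero] at h; exact h.symm)
  have hd3ne : d3 ≠ 0 := fun h => hk13 (by rw [hd3d, sub_eq_zero] at h; exact h.symm)
  -- main dichotomy: produce a nonzero isotropic vector orthogonal to v
  have main : ∃ w : K × K × K, w ≠ 0 ∧ dotp w w = 0 ∧ dotp w v = 0 := by
    by_cases hdep : ∃ μ : K, e3 = smt μ e2
    · obtain ⟨μ, hμ⟩ := hdep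
      have hμ0 : μ ≠ 0 := by
        rintro rfl; apply he3ne; rw [hμ]; simp [smt]
      have hμ1 : μ ≠ 1 := by
        rintro rfl
        apply hbc
        have h' : e3 = e2 := by rw [hμ]; simp [smt]
        rw [he2d, he3d] at h'
        exact (sub_left_inj.mp h').symm
      have r2 := R1 e2 (Or.inl rfl)
      have r3 := R1 e3 (Or.inr rfl)
      rw [hμ, dotp_smt_right] at r3
      have hq3 : dotp (smt μ e2) (smt μ e2) = μ * μ * dotp e2 e2 := by
        simp [dotp, smt]; ring
      rw [hq3] at r3
      have hq : dotp e2 e2 = 0 := by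
        have hfac : μ * (μ - 1) * dotp e2 e2 = 0 := by linear_combination r3 - μ * r2
        have := mul_eq_zero.mp hfac
        rcases this with h | h
        · rcases mul_eq_zero.mp h with h' | h'
          · exact absurd h' hμ0
          · exact absurd (sub_eq_zero.mp h') hμ1
        · exact h
      have hB : dotp v e2 = 0 := by
        have h20 : 2 * dotp v e2 = 0 := by linear_combination r2 - hq
        exact (mul_eq_zero.mp h20).resolve_left h2K
      exact ⟨e2, he2ne, hq, by rw [dotp_comm]; exact hB⟩
    · have hn : crossp e2 e3 ≠ 0 := fun h => hdep (parallel_of_crossp_eq_zero he2ne h)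
      have horth : ∀ d : K × K × K, (d = d2 ∨ d = d3) → crossp (crossp e2 e3) d = 0 := by
        intro d hd
        rw [crossp_comm, triple_prod, dotp_comm d e3, dotp_comm d e2,
          R3 e3 d (Or.inr rfl) hd, R3 e2 d (Or.inl rfl) hd]
        simp [smt, Prod.ext_iff]
      obtain ⟨μ2, hμ2⟩ := parallel_of_crossp_eq_zero hn (horth d2 (Or.inl rfl))
      obtain ⟨μ3, hμ3⟩ := parallel_of_crossp_eq_zero hn (horth d3 (Or.inr rfl))
      have hμ20 : μ2 ≠ 0 := by rintro rfl; apply hd2ne; rw [hμ2]; simp [smt]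
      have hμ30 : μ3 ≠ 0 := by rintro rfl; apply hd3ne; rw [hμ3]; simp [smt]
      have hμ23 : μ2 ≠ μ3 := by
        rintro rfl
        apply hk23
        have h' : d2 = d3 := by rw [hμ2, hμ3]
        rw [hd2d, hd3d] at h'
        exact sub_left_inj.mp h'
      have r2 := R2 d2 (Or.inl rfl)
      have r3 := R2 d3 (Or.inr rfl)
      rw [hμ2] at r2
      rw [hμ3] at r3
      rw [dotp_smt_right, dotp_smt_smt] at r2 r3
      have hQ : dotp (crossp e2 e3) (crossp e2 e3) = 0 := by
        have hfac : μ2 * μ3 * (μ2 - μ3) * dotp (crossp e2 e3) (crossp e2 e3) = 0 := by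
          linear_combination μ3 * r2 - μ2 * r3
        have h1 := mul_eq_zero.mp hfac
        rcases h1 with h1 | h1
        · rcases mul_eq_zero.mp h1 with h1 | h1
          · rcases mul_eq_zero.mp h1 with h1 | h1
            · exact absurd h1 hμ20
            · exact absurd h1 hμ30
          · exact absurd (sub_eq_zero.mp h1) hμ23
        · exact h1
      have hB : dotp v (crossp e2 e3) = 0 := by
        have h20 : 2 * (μ2 * dotp v (crossp e2 e3)) = 0 := by
          linear_combination r2 - μ2 * μ2 * hQ
        exact ((mul_eq_zero.mp ((mul_eq_zero.mp h20).resolve_left h2K)).resolve_left hμ20)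
      exact ⟨crossp e2 e3, hn, hQ, by rw [dotp_comm]; exact hB⟩
  obtain ⟨w, hw0, hww, hwv⟩ := main
  obtain ⟨β, hβ⟩ := key_isotropic hw0 hww hwv
  exact ⟨β, by rw [hβ, hvv]⟩

end Tri2

open Finset

section Count
variable {F : Type*} [Field F] [Fintype F] [DecidableEq F]

lemma quadChar_sum_shift (hF : ringChar F ≠ 2) (c : F) :
    ∑ t : F, quadraticChar F (t - c) = 0 := by
  rw [← quadraticChar_sum_zero hF]
  exact Fintype.sum_equiv (Equiv.subRight c) _ _ fun t => rfl

lemma quadChar_card_sq_eq (hF : ringChar F ≠ 2) (t : F) :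
    ((univ.filter fun y : F => y ^ 2 = t).card : ℤ) = quadraticChar F t + 1 := by
  rw [← quadraticChar_card_sqrts hF t]
  norm_cast
  congr 1
  rw [Set.toFinset_setOf]

lemma quadChar_sum_mul_shift (hF : ringChar F ≠ 2) (c : F) (hc : c ≠ 0) :
    ∑ t : F, quadraticChar F (t * (t - c)) = -1 := by
  have key : ∑ t ∈ univ.erase (0 : F), quadraticChar F (t * (t - c)) =
      ∑ s ∈ univ.erase (1 : F), quadraticChar F s := by
    apply Finset.sum_nbij' (fun t => 1 - c * t⁻¹) (fun s => c * (1 - s)⁻¹)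
    · intro t ht
      simp only [mem_erase, mem_univ, and_true] at ht ⊢
      intro h
      apply ht
      have : c * t⁻¹ = 0 := by linear_combination -h
      rcases mul_eq_zero.mp this with h' | h'
      · exact absurd h' hc
      · exact inv_eq_zero.mp h'
    · intro s hs
      simp only [mem_erase, mem_univ, and_true] at hs ⊢
      intro h
      rcases mul_eq_zero.mp h with h' | h'
      · exact hc h'
      · exact hs (by
          have := inv_eq_zero.mp h'
          linear_combination -this)
    · intro t ht
      simp only [mem_erase, mem_univ, and_true] at ht
      field_simp
      rw [sub_sub_cancel]; exact div_self hc
    · intro s hs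
      simp only [mem_erase, mem_univ, and_true] at hs
      have h1 : (1 : F) - s ≠ 0 := fun h => hs (by linear_combination -h)
      field_simp
      ring
    · intro t ht
      simp only [mem_erase, mem_univ, and_true] at ht
      have h1 : t * (t - c) = t ^ 2 * (1 - c * t⁻¹) := by field_simp
      rw [h1, map_mul, quadraticChar_sq_one' ht, one_mul]
  have h0 : quadraticChar F (0 * (0 - c)) = 0 := by rw [zero_mul]; exact quadraticChar_zero
  calc ∑ t : F, quadraticChar F (t * (t - c))
      = ∑ t ∈ univ.erase (0 : F), quadraticChar F (t * (t - c)) := by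
        rw [← Finset.add_sum_erase _ _ (mem_univ (0 : F)), h0, zero_add]
    _ = ∑ s ∈ univ.erase (1 : F), quadraticChar F s := key
    _ = -1 := by
        have h2 := Finset.add_sum_erase univ (quadraticChar F) (mem_univ (1 : F))
        rw [quadraticChar_sum_zero hF] at h2
        have h1 : quadraticChar F (1 : F) = 1 := map_one _
        linarith [h2]

lemma quadChar_sum_sq_sub (hF : ringChar F ≠ 2) (c : F) :
    ∑ y : F, quadraticChar F (y ^ 2 - c) =
      (if c = 0 then (Fintype.card F : ℤ) else 0) - 1 := by
  by_cases hc : c = 0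
  · subst hc
    simp only [if_pos rfl, sub_zero]
    have : ∀ y : F, quadraticChar F (y ^ 2) = if y = 0 then 0 else 1 := by
      intro y
      by_cases hy : y = 0
      · simp [hy]
      · rw [if_neg hy]; exact quadraticChar_sq_one' hy
    rw [Finset.sum_congr rfl fun y _ => this y, Finset.sum_ite, Finset.sum_const,
      Finset.sum_const, if_pos trivial]
    simp [Finset.filter_eq', Finset.filter_ne', Finset.card_univ,
      Finset.card_erase_of_mem (mem_univ (0 : F))]
    have : 0 < Fintype.card F := Fintype.card_pos
    push_cast
    omega
  · rw [if_neg hc]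
    -- fiberwise
    have fib : ∑ y : F, quadraticChar F (y ^ 2 - c) =
        ∑ t : F, ∑ y ∈ univ.filter (fun y : F => y ^ 2 = t), quadraticChar F (y ^ 2 - c) := by
      rw [Finset.sum_fiberwise_eq_sum_filter univ univ (fun y : F => y ^ 2)
        (fun y => quadraticChar F (y ^ 2 - c))]
      simp
    rw [fib]
    have step : ∀ t : F, ∑ y ∈ univ.filter (fun y : F => y ^ 2 = t),
        quadraticChar F (y ^ 2 - c) = (quadraticChar F t + 1) * quadraticChar F (t - c) := by
      intro t
      rw [Finset.sum_congr rfl (fun y hy => by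
        rw [(Finset.mem_filter.mp hy).2])]
      rw [Finset.sum_const, ← quadChar_card_sq_eq hF t]
      simp [mul_comm]
    rw [Finset.sum_congr rfl fun t _ => step t]
    have expand : ∀ t : F, (quadraticChar F t + 1) * quadraticChar F (t - c) =
        quadraticChar F (t * (t - c)) + quadraticChar F (t - c) := by
      intro t; rw [map_mul]; ring
    rw [Finset.sum_congr rfl fun t _ => expand t, Finset.sum_add_distrib,
      quadChar_sum_mul_shift hF c hc, quadChar_sum_shift hF c]
    ring

end Count

section Sphere
variable {F : Type*} [Field F] [Fintype F] [DecidableEq F]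

lemma sphere_card_ge (hF : ringChar F ≠ 2) (α : F) :
    (Fintype.card F : ℤ) ^ 2 - (Fintype.card F : ℤ) ≤
      ((univ.filter fun x : F × F × F => x.1 ^ 2 + x.2.1 ^ 2 + x.2.2 ^ 2 = α).card : ℤ) := by
  set q : ℤ := (Fintype.card F : ℤ) with hq
  have hcard : ((univ.filter fun x : F × F × F => x.1 ^ 2 + x.2.1 ^ 2 + x.2.2 ^ 2 = α).card : ℤ)
      = ∑ w : F × F, ∑ x : F, (if x ^ 2 + w.1 ^ 2 + w.2 ^ 2 = α then (1 : ℤ) else 0) := by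
    rw [Finset.card_filter]
    push_cast
    rw [Fintype.sum_prod_type]
    rw [Finset.sum_comm]
  have inner : ∀ w : F × F, ∑ x : F, (if x ^ 2 + w.1 ^ 2 + w.2 ^ 2 = α then (1 : ℤ) else 0)
      = quadraticChar F (α - w.1 ^ 2 - w.2 ^ 2) + 1 := by
    intro w
    have hiff : ∀ x : F, (x ^ 2 + w.1 ^ 2 + w.2 ^ 2 = α) ↔ (x ^ 2 = α - w.1 ^ 2 - w.2 ^ 2) := by
      intro x; constructor <;> intro h <;> linear_combination h
    rw [Finset.sum_congr rfl fun x _ => by rw [if_congr (hiff x) rfl rfl]]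
    rw [Finset.sum_boole]
    push_cast [← quadChar_card_sq_eq hF (α - w.1 ^ 2 - w.2 ^ 2)]
    norm_cast
  rw [hcard, Finset.sum_congr rfl fun w _ => inner w, Finset.sum_add_distrib]
  have htot : ∑ w : F × F, quadraticChar F (α - w.1 ^ 2 - w.2 ^ 2)
      = quadraticChar F (-1) * quadraticChar F α * q := by
    rw [Fintype.sum_prod_type]
    have hy : ∀ y : F, ∑ z : F, quadraticChar F (α - y ^ 2 - z ^ 2)
        = quadraticChar F (-1) * ((if y ^ 2 = α then q else 0) - 1) := by
      intro y
      have hpt : ∀ z : F, α - y ^ 2 - z ^ 2 = -1 * (z ^ 2 - (α - y ^ 2)) := by intro z; ring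
      rw [Finset.sum_congr rfl fun z _ => by rw [hpt z, map_mul]]
      rw [← Finset.mul_sum, quadChar_sum_sq_sub hF (α - y ^ 2)]
      congr 2
      have : (α - y ^ 2 = 0) ↔ (y ^ 2 = α) := by
        constructor <;> intro h <;> linear_combination -h
      simp only [this, hq]
    rw [Finset.sum_congr rfl fun y _ => hy y, ← Finset.mul_sum]
    have : ∑ y : F, ((if y ^ 2 = α then q else 0) - 1)
        = q * ((univ.filter fun y : F => y ^ 2 = α).card : ℤ) - q := by
      rw [Finset.sum_sub_distrib, Finset.sum_const, Finset.sum_ite, Finset.sum_const,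
        Finset.sum_const]
      simp [Finset.card_univ, mul_comm]
      exact hq.symm
    rw [this, quadChar_card_sq_eq hF α]
    ring
  rw [htot]
  have hq1 : 1 ≤ q := by
    rw [hq]; exact_mod_cast Fintype.card_pos
  have hb : -1 ≤ quadraticChar F (-1) * quadraticChar F α := by
    rcases quadraticChar_isQuadratic F (-1) with h1 | h1 | h1 <;>
      rcases quadraticChar_isQuadratic F α with h2 | h2 | h2 <;>
        rw [h1, h2] <;> norm_num
  have hconst : ∑ _w : F × F, (1 : ℤ) = q ^ 2 := by
    rw [Finset.sum_const, Finset.card_univ, Fintype.card_prod]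
    push_cast
    ring
  rw [hconst]
  nlinarith [hb, hq1]

end Sphere

/-- `A ⊆ Γ` is a `C_h[g]`-set. -/
def IsChSet {Γ : Type*} [AddCommGroup Γ] (h g : ℕ) (A : Set Γ) : Prop :=
  ∀ X : Finset Γ, X.card = h → ∀ K : Finset Γ, K.card = g →
    ∃ k ∈ K, ¬ (∀ x ∈ X, x + k ∈ A)

theorem stmt5 (p : ℕ) [Fact p.Prime] (hodd : Odd p) (α : ZMod p)
    (hα : if p % 4 = 1 then ¬ IsSquare α else α ≠ 0 ∧ IsSquare α) :
    IsChSet 3 3 {x : ZMod p × ZMod p × ZMod p | x.1 ^ 2 + x.2.1 ^ 2 + x.2.2 ^ 2 = α} ∧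
    (p : ℤ) ^ 2 - (p : ℤ) ≤
      ({x : ZMod p × ZMod p × ZMod p | x.1 ^ 2 + x.2.1 ^ 2 + x.2.2 ^ 2 = α} : Set _).ncard := by
  have hp2 : p ≠ 2 := by rintro rfl; exact (by decide : ¬ Odd 2) hodd
  have hchar : ringChar (ZMod p) ≠ 2 := by rw [ZMod.ringChar_zmod_n]; exact hp2
  have h2K : (2 : ZMod p) ≠ 0 := Ring.two_ne_zero hchar
  constructor
  · intro X hX K hK
    by_contra hcon
    push_neg at hcon
    obtain ⟨a, b, c, hab, hac, hbc, hXeq⟩ := Finset.card_eq_three.mp hX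
    obtain ⟨k1, k2, k3, hk12, hk13, hk23, hKeq⟩ := Finset.card_eq_three.mp hK
    have H : ∀ x k : ZMod p × ZMod p × ZMod p, (x = a ∨ x = b ∨ x = c) →
        (k = k1 ∨ k = k2 ∨ k = k3) → dotp (x + k) (x + k) = α := by
      intro x k hx hk
      have hmem := hcon k (by rw [hKeq]; simp [hk]) x (by rw [hXeq]; simp [hx])
      simp only [Set.mem_setOf_eq] at hmem
      simp only [dotp]
      linear_combination hmem
    obtain ⟨β, hβ⟩ := grid_lemma h2K α a b c k1 k2 k3 hbc hab hac hk12 hk13 hk23 H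
    by_cases hp4 : p % 4 = 1
    · rw [if_pos hp4] at hα
      obtain ⟨γ, hγ⟩ := (ZMod.exists_sq_eq_neg_one_iff (p := p)).mpr (by omega)
      exact hα ⟨γ * β, by linear_combination β ^ 2 * hγ + hβ⟩
    · rw [if_neg hp4] at hα
      obtain ⟨hα0, γ, hγ⟩ := hα
      have hγ0 : γ ≠ 0 := by rintro rfl; exact hα0 (by rw [hγ, mul_zero])
      have hsq : IsSquare (-1 : ZMod p) := by
        refine ⟨β * γ⁻¹, ?_⟩
        field_simp
        linear_combination hγ - hβ
      rw [ZMod.exists_sq_eq_neg_one_iff] at hsq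
      have hp2' : p % 2 = 1 := Nat.odd_iff.mp hodd
      have : p % 4 % 2 = p % 2 := Nat.mod_mod_of_dvd p (by norm_num)
      omega
  · have hfin : ({x : ZMod p × ZMod p × ZMod p | x.1 ^ 2 + x.2.1 ^ 2 + x.2.2 ^ 2 = α} : Set _).ncard
        = (univ.filter fun x : ZMod p × ZMod p × ZMod p =>
            x.1 ^ 2 + x.2.1 ^ 2 + x.2.2 ^ 2 = α).card := by
      rw [Set.ncard_eq_toFinset_card']
      congr 1
      rw [Set.toFinset_setOf]
    rw [hfin]
    have := sphere_card_ge (F := ZMod p) hchar α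
    rwa [ZMod.card p] at this
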